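/- Let N be a tree-based rooted phylogenetic network. Then the number of support trees of N equals the number of supporting sets for the bipartite graph J_N. -/

import Mathlib

open Relation

/-- Out-degree of a vertex in a digraph given by its arc relation. -/
noncomputable def outDeg {V : Type*} (A : V → V → Prop) (v : V) : ℕ := {u | A v u}.ncard
/-- In-degree of a vertex in a digraph given by its arc relation. -/
noncomputable def inDeg {V : Type*} (A : V → V → Prop) (v : V) : ℕ := {u | A u v}.ncard

/-- A rooted phylogenetic network on leaf set `X`. -/
structure PhyloNet (V : Type*) [Fintype V] [DecidableEq V] where
  Arc : V → V → Prop
  root : V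
  X : Finset V
  acyclic : ∀ v, ¬ Relation.TransGen Arc v v
  reach : ∀ v, Relation.ReflTransGen Arc root v
  root_out : 1 ≤ outDeg Arc root
  leaf_iff : ∀ v, v ∈ X ↔ outDeg Arc v = 0
  leaf_in : ∀ v ∈ X, inDeg Arc v = 1
  internal : ∀ v, v ≠ root → v ∉ X →
    (inDeg Arc v = 1 ∧ 2 ≤ outDeg Arc v) ∨ (2 ≤ inDeg Arc v ∧ outDeg Arc v = 1)

section Defs
variable {V : Type*} [Fintype V] [DecidableEq V]

/-- A reticulation: in-degree at least two. -/
def IsRetic (N : PhyloNet V) (v : V) : Prop := 2 ≤ inDeg N.Arc v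
/-- A tree vertex: a non-leaf vertex of in-degree at most one. -/
def IsTreeVert (N : PhyloNet V) (v : V) : Prop := v ∉ N.X ∧ inDeg N.Arc v ≤ 1
/-- An omnian: a non-leaf vertex all of whose children are reticulations. -/
def IsOmnian (N : PhyloNet V) (v : V) : Prop := v ∉ N.X ∧ ∀ u, N.Arc v u → IsRetic N u
/-- A binary network: all in- and out-degrees are at most two. -/
def IsBinary (N : PhyloNet V) : Prop := ∀ v : V, inDeg N.Arc v ≤ 2 ∧ outDeg N.Arc v ≤ 2

/-- A rooted spanning tree of `N` with the same root as `N`. -/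
def IsRSTree (N : PhyloNet V) (T : V → V → Prop) : Prop :=
  (∀ u v, T u v → N.Arc u v) ∧ (∀ v, inDeg T v = 0 ↔ v = N.root) ∧
  (∀ v, v ≠ N.root → inDeg T v = 1)

/-- A support tree: a rooted spanning tree with the same root, all of whose leaves are in `X`. -/
def IsSupportTree (N : PhyloNet V) (T : V → V → Prop) : Prop :=
  IsRSTree N T ∧ ∀ v, outDeg T v = 0 → v ∈ N.X

/-- Tree-based network. -/
def TreeBased (N : PhyloNet V) : Prop := ∃ T, IsSupportTree N T

/-- A (nonempty, repetition-free) directed path recorded as a list of vertices. -/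
def IsPathIn (A : V → V → Prop) (p : List V) : Prop := p ≠ [] ∧ p.Chain' A ∧ p.Nodup
/-- The path ends at a vertex of `X`. -/
def EndsIn (X : Finset V) (p : List V) : Prop := ∃ x ∈ X, p.getLast? = some x
/-- Pairwise vertex-disjoint family of paths. -/
def PairwiseDisj (P : Finset (List V)) : Prop :=
  ∀ p ∈ P, ∀ q ∈ P, p ≠ q → ∀ v : V, v ∈ p → v ∉ q
/-- A partition of the vertex set of `N` into vertex-disjoint directed paths
ending at leaves in `X`. -/
def IsPathPartition (N : PhyloNet V) (P : Finset (List V)) : Prop :=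
  (∀ p ∈ P, IsPathIn N.Arc p ∧ EndsIn N.X p) ∧ PairwiseDisj P ∧ ∀ v : V, ∃ p ∈ P, v ∈ p

/-- A matching in the bipartite graph with edge set `E` (edges from a first copy of `V`
to a second copy of `V`), recorded as a set of edges no two of which share an endpoint. -/
def IsMatchingOn (E : V → V → Prop) (M : Finset (V × V)) : Prop :=
  (∀ e ∈ M, E e.1 e.2) ∧ ∀ e ∈ M, ∀ f ∈ M, (e.1 = f.1 ∨ e.2 = f.2) → e = f

/-- Size of a maximum matching of the bipartite graph with edge set `E`. -/
noncomputable def maxMatching (E : V → V → Prop) : ℕ :=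
  sSup {n | ∃ M : Finset (V × V), IsMatchingOn E M ∧ M.card = n}

/-- An antichain of vertices of `N`. -/
def AntichainIn (N : PhyloNet V) (S : Finset V) : Prop :=
  ∀ u ∈ S, ∀ v ∈ S, u ≠ v → ¬ Relation.TransGen N.Arc u v

/-- The antichain-to-leaf property: from every antichain there are pairwise
vertex-disjoint directed paths to leaves, one starting at each antichain element. -/
def AntichainToLeaf (N : PhyloNet V) : Prop :=
  ∀ S : Finset V, AntichainIn N S →
    ∃ f : V → List V,
      (∀ s ∈ S, IsPathIn N.Arc (f s) ∧ (f s).head? = some s ∧ EndsIn N.X (f s)) ∧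
      ∀ s ∈ S, ∀ t ∈ S, s ≠ t → ∀ v : V, v ∈ f s → v ∉ f t

/-- A temporal network: a real labelling strictly increasing along tree arcs and
constant along reticulation arcs. -/
def Temporal (N : PhyloNet V) : Prop :=
  ∃ l : V → ℝ, ∀ u v, N.Arc u v →
    (IsRetic N v → l u = l v) ∧ (¬ IsRetic N v → l u < l v)

/-- `N'` is a binary refinement of `N`, witnessed by the contraction map `φ`:
`N` is obtained from the binary network `N'` by contracting the arcs whose endpoints
are identified by `φ`. -/
def IsBinRefinement {V' : Type*} [Fintype V'] [DecidableEq V']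
    (N' : PhyloNet V') (N : PhyloNet V) (φ : V' → V) : Prop :=
  IsBinary N' ∧ Function.Surjective φ ∧ φ N'.root = N.root ∧
  N'.X.image φ = N.X ∧ Set.InjOn φ ↑N'.X ∧
  (∀ u v : V, N.Arc u v ↔ ∃ u' v', φ u' = u ∧ φ v' = v ∧ N'.Arc u' v' ∧ φ u' ≠ φ v') ∧
  (∀ a b : V', φ a = φ b →
    Relation.ReflTransGen (fun x y => (N'.Arc x y ∨ N'.Arc y x) ∧ φ x = φ y) a b)

/-- Edge of the bipartite graph `B_N` between omnians and reticulations. -/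
def BEdge (N : PhyloNet V) (o r : V) : Prop := IsOmnian N o ∧ IsRetic N r ∧ N.Arc o r
/-- Edge of the bipartite graph `Z_N` between tree vertices with a reticulation child
and reticulations. -/
def ZEdge (N : PhyloNet V) (t r : V) : Prop :=
  IsTreeVert N t ∧ (∃ r', N.Arc t r' ∧ IsRetic N r') ∧ IsRetic N r ∧ N.Arc t r

/-- `R_t`: reticulations with no reticulation parent. -/
def Rt (N : PhyloNet V) (v : V) : Prop := IsRetic N v ∧ ∀ u, N.Arc u v → ¬ IsRetic N u
/-- `Q_t`: vertices with a child in `R_t`. -/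
def Qt (N : PhyloNet V) (v : V) : Prop := ∃ r, N.Arc v r ∧ Rt N r
/-- Edge of the bipartite graph `J_N`. -/
def JEdge (N : PhyloNet V) (q r : V) : Prop := Qt N q ∧ Rt N r ∧ N.Arc q r

/-- A supporting set for `J_N`. -/
def IsSupportingSet (N : PhyloNet V) (E : Finset (V × V)) : Prop :=
  (∀ e ∈ E, JEdge N e.1 e.2) ∧
  (∀ q, Qt N q → IsOmnian N q → ∃ e ∈ E, e.1 = q) ∧
  (∀ r, Rt N r → ∃! e : V × V, e ∈ E ∧ e.2 = r)

/-- An arboreal arc: `u` is a reticulation, or `v` is a tree vertex or a leaf. -/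
def ArborealArc (N : PhyloNet V) (u v : V) : Prop :=
  N.Arc u v ∧ (IsRetic N u ∨ ¬ IsRetic N v)

/-- The number of support trees of `N`, identified with their arc sets. -/
noncomputable def supCount (N : PhyloNet V) : ℕ :=
  {A' : Finset (V × V) | IsSupportTree N (fun u v => (u, v) ∈ A')}.ncard

/-- The bipartite graph `J_N`, as a simple graph on `Q_t ∪ R_t`. -/
def Jgraph (N : PhyloNet V) : SimpleGraph {v : V // Qt N v ∨ Rt N v} where
  Adj a b := JEdge N a.1 b.1 ∨ JEdge N b.1 a.1
  symm := by constructor; intro a b h; tauto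
  loopless := by
    constructor; rintro a (⟨_, _, h⟩ | ⟨_, _, h⟩) <;> exact N.acyclic _ (Relation.TransGen.single h)

/-- Degree in `J_N`. -/
noncomputable def Jdeg (N : PhyloNet V) (a : {v : V // Qt N v ∨ Rt N v}) : ℕ :=
  ((Jgraph N).neighborSet a).ncard

end Defs

/-- A rooted tree (equivalently, a subdivision of a rooted tree): a rooted digraph
in which every non-root vertex has in-degree one and everything is reachable
from the root. -/
structure RootedDirTree (V : Type*) [Fintype V] [DecidableEq V] where
  Arc : V → V → Prop
  root : V
  acyclic : ∀ v, ¬ Relation.TransGen Arc v v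
  reach : ∀ v, Relation.ReflTransGen Arc root v
  root_in : inDeg Arc root = 0
  in_one : ∀ v, v ≠ root → inDeg Arc v = 1
section Aux

variable {V : Type*} [Fintype V] [DecidableEq V] {N : PhyloNet V}

lemma no_arc_to_root (N : PhyloNet V) (u : V) : ¬ N.Arc u N.root := fun h =>
  N.acyclic N.root (Relation.TransGen.tail' (N.reach u) h)

lemma arc_ne_root {u v : V} (h : N.Arc u v) : v ≠ N.root := by
  rintro rfl; exact no_arc_to_root N u h

lemma ncard_le_one_singleton {s : Set V} (h : s.ncard ≤ 1) {a : V} (ha : a ∈ s) :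
    s = {a} := by
  rw [Set.eq_singleton_iff_unique_mem]
  refine ⟨ha, fun x hx => ?_⟩
  by_contra hne
  have hsub : ({x, a} : Set V) ⊆ s := by
    intro y hy; rcases hy with rfl | hy
    · exact hx
    · simp only [Set.mem_singleton_iff] at hy; subst hy; exact ha
  have h2 : (2 : ℕ) ≤ s.ncard := by
    calc (2 : ℕ) = ({x, a} : Set V).ncard := (Set.ncard_pair hne).symm
    _ ≤ s.ncard := Set.ncard_le_ncard hsub (Set.toFinite _)
  omega

lemma retic_ne_root {v : V} (h : IsRetic N v) : v ≠ N.root := by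
  rintro rfl
  have h0 : inDeg N.Arc N.root = 0 := by
    unfold inDeg
    rw [Set.ncard_eq_zero (Set.toFinite _)]
    ext u; simp [no_arc_to_root N u]
  unfold IsRetic at h; omega

lemma parents_eq_singleton_of_not_retic {u v : V} (hv : ¬ IsRetic N v)
    (hu : N.Arc u v) : {w | N.Arc w v} = {u} := by
  have hle : inDeg N.Arc v ≤ 1 := by unfold IsRetic at hv; omega
  exact ncard_le_one_singleton hle hu

lemma retic_not_leaf {u v : V} (h : N.Arc u v) : u ∉ N.X := by
  intro hX
  have h0 := (N.leaf_iff u).mp hX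
  unfold outDeg at h0
  rw [Set.ncard_eq_zero (Set.toFinite _)] at h0
  exact absurd h (by rw [Set.eq_empty_iff_forall_notMem] at h0; exact h0 v)

lemma retic_outdeg {u v : V} (hu : IsRetic N u) (h : N.Arc u v) :
    {w | N.Arc u w} = {v} := by
  rcases N.internal u (retic_ne_root hu) (retic_not_leaf h) with h1 | h1
  · unfold IsRetic at hu; omega
  · exact ncard_le_one_singleton (le_of_eq h1.2) h

lemma indeg_one_parent {T : V → V → Prop} {v : V} (h : inDeg T v = 1) :
    ∃ p, {u | T u v} = {p} := Set.ncard_eq_one.mp h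

lemma exists_out {T : V → V → Prop} {v : V} (h : outDeg T v ≠ 0) : ∃ w, T v w := by
  by_contra hcon
  push_neg at hcon
  apply h
  unfold outDeg
  rw [Set.ncard_eq_zero (Set.toFinite _)]
  ext w; simp [hcon w]

lemma st_exists_out {T : V → V → Prop} (hT : IsSupportTree N T) {v : V}
    (hv : v ∉ N.X) : ∃ w, T v w :=
  exists_out (fun h0 => hv (hT.2 v h0))

lemma forced_nonretic {T : V → V → Prop} (hT : IsSupportTree N T) {u v : V}
    (h : N.Arc u v) (hv : ¬ IsRetic N v) : T u v := by
  obtain ⟨⟨hsub, _, hin⟩, _⟩ := hT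
  obtain ⟨p, hp⟩ := indeg_one_parent (hin v (arc_ne_root h))
  have hpT : T p v := by
    have : p ∈ ({p} : Set V) := rfl
    rw [← hp] at this; exact this
  have hpu : p = u := by
    have hs := parents_eq_singleton_of_not_retic hv h
    have : p ∈ {w | N.Arc w v} := hsub _ _ hpT
    rw [hs] at this; exact this
  rwa [hpu] at hpT

lemma forced_retic {T : V → V → Prop} (hT : IsSupportTree N T) {u v : V}
    (hu : IsRetic N u) (h : N.Arc u v) : T u v := by
  obtain ⟨w, hw⟩ := st_exists_out hT (retic_not_leaf h)
  have hwv : w = v := by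
    have : w ∈ {x | N.Arc u x} := hT.1.1 _ _ hw
    rw [retic_outdeg hu h] at this; exact this
  rwa [hwv] at hw

lemma st_parent_unique {T : V → V → Prop} (hT : IsSupportTree N T) {u u' v : V}
    (h : T u v) (h' : T u' v) : u = u' := by
  obtain ⟨p, hp⟩ := indeg_one_parent (hT.1.2.2 v (arc_ne_root (hT.1.1 _ _ h)))
  have h1 : u ∈ {x | T x v} := h
  have h2 : u' ∈ {x | T x v} := h'
  rw [hp] at h1 h2
  rw [Set.mem_singleton_iff] at h1 h2
  rw [h1, h2]

lemma unique_retic_parent (hN : TreeBased N) {v : V} (hv : IsRetic N v)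
    (h : ¬ Rt N v) : ∃ p, {u | N.Arc u v ∧ IsRetic N u} = {p} := by
  obtain ⟨T0, hT0⟩ := hN
  unfold Rt at h
  push_neg at h
  obtain ⟨u, hu, hru⟩ := h hv
  refine ⟨u, Set.eq_singleton_iff_unique_mem.mpr ⟨⟨hu, hru⟩, ?_⟩⟩
  rintro x ⟨hx, hrx⟩
  exact st_parent_unique hT0 (forced_retic hT0 hrx hx) (forced_retic hT0 hru hu)

lemma omnian_tree_qt (hN : TreeBased N) {q : V} (ho : IsOmnian N q)
    (hq : ¬ IsRetic N q) : Qt N q := by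
  obtain ⟨T0, hT0⟩ := hN
  obtain ⟨w, hw⟩ := st_exists_out hT0 ho.1
  have hwarc : N.Arc q w := hT0.1.1 _ _ hw
  refine ⟨w, hwarc, ho.2 w hwarc, ?_⟩
  intro u hu hru
  have h1 := forced_retic hT0 hru hu
  have := st_parent_unique hT0 h1 hw
  rw [this] at hru
  exact hq hru

/-- The candidate support tree built from a supporting set. -/
def TE (N : PhyloNet V) (E : Finset (V × V)) (u v : V) : Prop :=
  N.Arc u v ∧ (¬ IsRetic N v ∨ IsRetic N u ∨ (u, v) ∈ E)

lemma exists_parent {v : V} (hv : v ≠ N.root) : ∃ u, N.Arc u v := by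
  have h1 : inDeg N.Arc v = 1 ∨ 2 ≤ inDeg N.Arc v := by
    by_cases hX : v ∈ N.X
    · exact Or.inl (N.leaf_in v hX)
    · rcases N.internal v hv hX with h | h
      · exact Or.inl h.1
      · exact Or.inr h.1
  have : inDeg N.Arc v ≠ 0 := by omega
  unfold inDeg at this
  by_contra hcon
  push_neg at hcon
  apply this
  rw [Set.ncard_eq_zero (Set.toFinite _)]
  ext u; simp [hcon u]

lemma exists_child {v : V} (hv : v ∉ N.X) : ∃ w, N.Arc v w := by
  apply exists_out (T := N.Arc)
  intro h0
  exact hv ((N.leaf_iff v).mpr h0)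

lemma TE_indeg_one (hN : TreeBased N) {E : Finset (V × V)}
    (hE : IsSupportingSet N E) {v : V} (hv : v ≠ N.root) : inDeg (TE N E) v = 1 := by
  obtain ⟨hE1, hE2, hE3⟩ := hE
  unfold inDeg
  by_cases hret : IsRetic N v
  · by_cases hrt : Rt N v
    · obtain ⟨e, ⟨heE, he2⟩, huniq⟩ := hE3 v hrt
      rw [show {u | TE N E u v} = {e.1} from ?_]
      · exact Set.ncard_singleton _
      ext u
      simp only [Set.mem_setOf_eq, Set.mem_singleton_iff, TE]
      constructor
      · rintro ⟨harc, hcase | hcase | hcase⟩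
        · exact absurd hret hcase
        · exact absurd hcase (hrt.2 u harc)
        · have := huniq (u, v) ⟨hcase, rfl⟩
          exact congrArg Prod.fst this
      · rintro rfl
        have hJ := hE1 e heE
        have harc : N.Arc e.1 v := by
          have := hJ.2.2; rwa [he2] at this
        refine ⟨harc, Or.inr (Or.inr ?_)⟩
        have : (e.1, v) = e := by rw [← he2]
        rwa [this]
    · obtain ⟨p, hp⟩ := unique_retic_parent hN hret hrt
      rw [show {u | TE N E u v} = {p} from ?_]
      · exact Set.ncard_singleton _
      ext u
      simp only [Set.mem_setOf_eq, Set.mem_singleton_iff, TE]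
      constructor
      · rintro ⟨harc, hcase | hcase | hcase⟩
        · exact absurd hret hcase
        · have : u ∈ {w | N.Arc w v ∧ IsRetic N w} := ⟨harc, hcase⟩
          rwa [hp] at this
        · exact absurd (hE1 _ hcase).2.1 hrt
      · intro hup
        have hmem : p ∈ {w | N.Arc w v ∧ IsRetic N w} := by rw [hp]; rfl
        rw [hup]
        exact ⟨hmem.1, Or.inr (Or.inl hmem.2)⟩
  · obtain ⟨u, hu⟩ := exists_parent hv
    rw [show {w | TE N E w v} = {u} from ?_]
    · exact Set.ncard_singleton _
    ext w
    simp only [Set.mem_setOf_eq, Set.mem_singleton_iff, TE]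
    constructor
    · rintro ⟨harc, -⟩
      have := parents_eq_singleton_of_not_retic hret hu
      have hw : w ∈ {x | N.Arc x v} := harc
      rwa [this] at hw
    · intro hwu
      rw [hwu]
      exact ⟨hu, Or.inl hret⟩

lemma TE_isSupport (hN : TreeBased N) {E : Finset (V × V)}
    (hE : IsSupportingSet N E) : IsSupportTree N (TE N E) := by
  refine ⟨⟨fun u v h => h.1, ?_, fun v hv => TE_indeg_one hN hE hv⟩, ?_⟩
  · intro v
    constructor
    · intro h0
      by_contra hv
      rw [TE_indeg_one hN hE hv] at h0
      exact one_ne_zero h0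
    · rintro rfl
      unfold inDeg
      rw [Set.ncard_eq_zero (Set.toFinite _)]
      ext u
      simp only [Set.mem_setOf_eq, Set.mem_empty_iff_false, iff_false]
      rintro ⟨harc, -⟩
      exact no_arc_to_root N u harc
  · intro v h0
    by_contra hX
    have hnone : ∀ w, ¬ TE N E v w := by
      intro w hw
      have : {x | TE N E v x} = ∅ := by
        rw [← Set.ncard_eq_zero (Set.toFinite _)]; exact h0
      rw [Set.eq_empty_iff_forall_notMem] at this
      exact this w hw
    by_cases homn : ∀ w, N.Arc v w → IsRetic N w
    · have ho : IsOmnian N v := ⟨hX, homn⟩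
      by_cases hret : IsRetic N v
      · obtain ⟨w, hw⟩ := exists_child hX
        exact hnone w ⟨hw, Or.inr (Or.inl hret)⟩
      · obtain ⟨e, heE, he1⟩ := hE.2.1 v (omnian_tree_qt hN ho hret) ho
        have hJ := hE.1 e heE
        have harc : N.Arc v e.2 := by
          have := hJ.2.2; rwa [he1] at this
        refine hnone e.2 ⟨harc, Or.inr (Or.inr ?_)⟩
        have : (v, e.2) = e := by rw [← he1]
        rwa [this]
    · push_neg at homn
      obtain ⟨w, hw, hwret⟩ := homn
      exact hnone w ⟨hw, Or.inl hwret⟩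

/-- From a support tree (arc set) to a supporting set. -/
noncomputable def fmap (N : PhyloNet V) (A : Finset (V × V)) : Finset (V × V) :=
  @Finset.filter _ (fun e => Rt N e.2) (Classical.decPred _) A

lemma mem_fmap {A : Finset (V × V)} {e : V × V} :
    e ∈ fmap N A ↔ e ∈ A ∧ Rt N e.2 := by
  classical
  unfold fmap
  exact Finset.mem_filter

lemma fmap_supporting {A : Finset (V × V)}
    (hA : IsSupportTree N (fun u v => (u, v) ∈ A)) : IsSupportingSet N (fmap N A) := by
  have hsub : ∀ e : V × V, e ∈ A → N.Arc e.1 e.2 := fun e he => hA.1.1 e.1 e.2 he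
  refine ⟨?_, ?_, ?_⟩
  · intro e he
    rw [mem_fmap] at he
    exact ⟨⟨e.2, hsub e he.1, he.2⟩, he.2, hsub e he.1⟩
  · intro q hq ho
    have hqret : ¬ IsRetic N q := by
      intro hret
      obtain ⟨r, hr, hrt⟩ := hq
      exact hrt.2 q hr hret
    obtain ⟨w, hw⟩ := st_exists_out hA ho.1
    have hwarc : N.Arc q w := hsub (q, w) hw
    have hwrt : Rt N w := by
      refine ⟨ho.2 w hwarc, fun u hu hru => ?_⟩
      have := st_parent_unique hA (forced_retic hA hru hu) hw
      rw [this] at hru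
      exact hqret hru
    exact ⟨(q, w), mem_fmap.mpr ⟨hw, hwrt⟩, rfl⟩
  · intro r hrt
    have hroot : r ≠ N.root := retic_ne_root hrt.1
    obtain ⟨p, hp⟩ := indeg_one_parent (hA.1.2.2 r hroot)
    have hpA : (p, r) ∈ A := by
      have : p ∈ ({p} : Set V) := rfl
      rw [← hp] at this; exact this
    refine ⟨(p, r), ⟨mem_fmap.mpr ⟨hpA, hrt⟩, rfl⟩, ?_⟩
    rintro ⟨a, b⟩ ⟨hab, hb⟩
    rw [mem_fmap] at hab
    have hb' : b = r := hb
    subst hb'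
    have ha : a ∈ {u | (u, b) ∈ A} := hab.1
    rw [hp, Set.mem_singleton_iff] at ha
    rw [ha]

lemma reconstruct {A : Finset (V × V)}
    (hA : IsSupportTree N (fun u v => (u, v) ∈ A)) (u v : V) :
    (u, v) ∈ A ↔ TE N (fmap N A) u v := by
  have hsub : ∀ u v : V, (u, v) ∈ A → N.Arc u v := fun u v h => hA.1.1 u v h
  constructor
  · intro h
    refine ⟨hsub u v h, ?_⟩
    by_cases hret : IsRetic N v
    · by_cases hu : IsRetic N u
      · exact Or.inr (Or.inl hu)
      · refine Or.inr (Or.inr (mem_fmap.mpr ⟨h, hret, ?_⟩))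
        intro p hpv hpret
        have := st_parent_unique hA (forced_retic hA hpret hpv) h
        rw [this] at hpret
        exact hu hpret
    · exact Or.inl hret
  · rintro ⟨harc, hcase | hcase | hcase⟩
    · exact forced_nonretic hA harc hcase
    · exact forced_retic hA hcase harc
    · exact (mem_fmap.mp hcase).1

end Aux

/-- the number of support trees of a tree-based network equals the
number of supporting sets for `J_N`. -/
theorem stmt17 {V : Type*} [Fintype V] [DecidableEq V] (N : PhyloNet V)
    (hN : TreeBased N) :
    supCount N = {E : Finset (V × V) | IsSupportingSet N E}.ncard := by
  classical
  have key : (fun A => fmap N A) '' {A' : Finset (V × V) |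
      IsSupportTree N (fun u v => (u, v) ∈ A')} = {E : Finset (V × V) | IsSupportingSet N E} := by
    ext E
    constructor
    · rintro ⟨A, hA, rfl⟩
      exact fmap_supporting hA
    · intro hE
      refine ⟨Finset.univ.filter (fun e => TE N E e.1 e.2), ?_, ?_⟩
      · have heq : (fun u v => (u, v) ∈ Finset.univ.filter (fun e => TE N E e.1 e.2)) = TE N E := by
          funext u v
          apply propext
          simp [Finset.mem_filter]
        show IsSupportTree N _
        rw [heq]
        exact TE_isSupport hN hE
      · show fmap N _ = E
        ext e
        rw [mem_fmap, Finset.mem_filter]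
        constructor
        · rintro ⟨⟨-, harc, hcase | hcase | hcase⟩, hrt⟩
          · exact absurd hrt.1 hcase
          · exact absurd hcase (hrt.2 e.1 harc)
          · rwa [Prod.mk.eta] at hcase
        · intro he
          have hJ := hE.1 e he
          exact ⟨⟨Finset.mem_univ _, hJ.2.2, Or.inr (Or.inr (by rwa [Prod.mk.eta]))⟩, hJ.2.1⟩
  have hinj : Set.InjOn (fun A => fmap N A) {A' : Finset (V × V) |
      IsSupportTree N (fun u v => (u, v) ∈ A')} := by
    intro A hA B hB hfe
    simp only at hfe
    ext ⟨u, v⟩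
    rw [reconstruct hA u v, reconstruct hB u v, hfe]
  unfold supCount
  rw [← key, Set.ncard_image_of_injOn hinj]
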